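/- Let G be a group that is nilpotent of class at most 3 (i.e. every triple commutator ⁅⁅x,y⁆,z⁆ lies in the center Z(G)). Then the left nucleus N_λ(°G) = {a ∈ G : a∘(x∘y) = (a∘x)∘y for all x,y ∈ G} (with x∘y = y⁻¹xy²) is invariant under every automorphism ψ of G (i.e. a ∈ N_λ(°G) implies ψ(a) ∈ N_λ(°G)), and N_λ(°G) is nilpotent of class at most 2, i.e. ⁅⁅a,b⁆,c⁆ = 1 for all a, b, c ∈ N_λ(°G). -/

import Mathlib

/-- The gyrogroup operation associated with a group: `x ∘ y = y⁻¹ * x * y²`. -/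
def gyrOp {G : Type*} [Group G] (x y : G) : G := y⁻¹ * x * y ^ 2

open scoped commutatorElement

/-- An element of the left nucleus of `°G` commutes with every commutator. -/
lemma commutator_mul_of_leftNucleus {G : Type*} [Group G] {c : G}
    (hc : ∀ x y : G, gyrOp c (gyrOp x y) = gyrOp (gyrOp c x) y) (a b : G) :
    ⁅a, b⁆ * c = c * ⁅a, b⁆ := by
  have E := hc b a⁻¹
  simp only [gyrOp, inv_inv, pow_two] at E
  group at E
  have E2 := congrArg (fun z => a * b * a⁻¹ * b⁻¹ * (b * a⁻¹ * z * (a * a * b⁻¹ * b⁻¹))) E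
  simp only [commutatorElement_def]
  group at E2 ⊢
  exact E2.symm

theorem leftNucleus_characteristic_and_class_le_two {G : Type*} [Group G]
    (h3 : ∀ x y z : G, ⁅⁅x, y⁆, z⁆ ∈ Subgroup.center G) :
    (∀ (ψ : G ≃* G) (a : G),
      (∀ x y : G, gyrOp a (gyrOp x y) = gyrOp (gyrOp a x) y) →
      ∀ x y : G, gyrOp (ψ a) (gyrOp x y) = gyrOp (gyrOp (ψ a) x) y) ∧
    (∀ a b c : G,
      (∀ x y : G, gyrOp a (gyrOp x y) = gyrOp (gyrOp a x) y) →
      (∀ x y : G, gyrOp b (gyrOp x y) = gyrOp (gyrOp b x) y) →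
      (∀ x y : G, gyrOp c (gyrOp x y) = gyrOp (gyrOp c x) y) →
      ⁅⁅a, b⁆, c⁆ = 1) := by
  constructor
  · intro ψ a ha x y
    have h := congrArg ψ (ha (ψ.symm x) (ψ.symm y))
    simpa [gyrOp, map_mul, map_inv, map_pow] using h
  · intro a b c _ _ hc
    exact commutatorElement_eq_one_iff_commute.mpr
      (commutator_mul_of_leftNucleus hc a b)
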